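/- Given a quantaloid V and a V-category A, the slice construction V(A) — with objects those of A, hom-posets V(A)(a,b) = {f ∈ V(a_+, b_+) : f ≤ A(a,b)} ordered as in V, composition inherited from V, and identity at a the element id_{a_+} viewed below A(a,a) — is itself a quantaloid, and there is an isomorphism of 2-categories V(A)-Cat ≅ V-Cat ↓ A between V(A)-enriched categories and the slice 2-category of V-categories over A. -/

import Mathlib

/-- A quantaloid: a (small) locally ordered bicategory whose hom-posets are
complete lattices and whose composition preserves suprema in each variable. -/
structure Quantaloid where
  Obj : Type
  Hom : Obj → Obj → Type
  [lat : ∀ u v : Obj, CompleteLattice (Hom u v)]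
  comp : ∀ {u v w : Obj}, Hom u v → Hom v w → Hom u w
  id : ∀ u : Obj, Hom u u
  comp_assoc : ∀ {u v w x : Obj} (f : Hom u v) (g : Hom v w) (h : Hom w x),
    comp (comp f g) h = comp f (comp g h)
  id_comp : ∀ {u v : Obj} (f : Hom u v), comp (id u) f = f
  comp_id : ∀ {u v : Obj} (f : Hom u v), comp f (id v) = f
  comp_sSup_left : ∀ {u v w : Obj} (S : Set (Hom u v)) (g : Hom v w),
    comp (sSup S) g = sSup ((fun f => comp f g) '' S)
  comp_sSup_right : ∀ {u v w : Obj} (f : Hom u v) (S : Set (Hom v w)),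
    comp f (sSup S) = sSup ((fun g => comp f g) '' S)

attribute [instance] Quantaloid.lat

/-- Transport of homs along equalities of objects. -/
def Quantaloid.cast (V : Quantaloid) {u u' v v' : V.Obj} (hu : u = u') (hv : v = v')
    (f : V.Hom u v) : V.Hom u' v' := hu ▸ hv ▸ f

/-- A `V`-category. -/
structure VCat (V : Quantaloid) where
  Obj : Type
  pt : Obj → V.Obj
  hom : ∀ a b : Obj, V.Hom (pt a) (pt b)
  id_le : ∀ a, V.id (pt a) ≤ hom a a
  comp_le : ∀ a b c, V.comp (hom a b) (hom b c) ≤ hom a c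

/-- A simulation from `A` to `B`. -/
def IsSimulation (V : Quantaloid) (A B : VCat V) (R : A.Obj → B.Obj → Prop) : Prop :=
  (∀ a b, R a b → A.pt a = B.pt b) ∧
  ∀ (a : A.Obj) (b : B.Obj), R a b → ∀ (a' : A.Obj) (h : A.pt a = B.pt b),
    V.cast h rfl (A.hom a a') ≤
      sSup {x : V.Hom (B.pt b) (A.pt a') |
        ∃ (b' : B.Obj) (h' : A.pt a' = B.pt b'), R a' b' ∧ x = V.cast rfl h'.symm (B.hom b b')}

/-- A bisimulation from `A` to `B`. -/
def IsBisimulation (V : Quantaloid) (A B : VCat V) (R : A.Obj → B.Obj → Prop) : Prop :=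
  IsSimulation V A B R ∧ IsSimulation V B A (fun b a => R a b)

/-- Bisimilarity of `V`-categories. -/
def Bisimilar (V : Quantaloid) (A B : VCat V) : Prop :=
  ∃ R, IsBisimulation V A B R ∧ (∀ a, ∃ b, R a b) ∧ (∀ b, ∃ a, R a b)

/-- A `V`-functor. -/
structure VFunctor (V : Quantaloid) (A B : VCat V) where
  toFun : A.Obj → B.Obj
  pt_eq : ∀ a, B.pt (toFun a) = A.pt a
  map_le : ∀ a a',
    V.cast (pt_eq a).symm (pt_eq a').symm (A.hom a a') ≤ B.hom (toFun a) (toFun a')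

/-- A surjective functional bisimulation (an "open" map). -/
def VFunctor.IsSFB {V : Quantaloid} {A B : VCat V} (f : VFunctor V A B) : Prop :=
  Function.Surjective f.toFun ∧
  ∀ (a : A.Obj) (b : B.Obj),
    B.hom (f.toFun a) b =
      sSup {x : V.Hom (B.pt (f.toFun a)) (B.pt b) |
        ∃ (a' : A.Obj) (h : f.toFun a' = b),
          x = V.cast (f.pt_eq a).symm ((f.pt_eq a').symm.trans (congrArg B.pt h)) (A.hom a a')}


section SliceAux

variable (V : Quantaloid) (A : VCat V)

-- basic cast lemmas
theorem Quantaloid.cast_rfl (V : Quantaloid) {u v : V.Obj} (f : V.Hom u v) :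
    V.cast rfl rfl f = f := rfl

theorem Quantaloid.cast_irrel (V : Quantaloid) {u u' v v' : V.Obj}
    (h1 h1' : u = u') (h2 h2' : v = v') (f : V.Hom u v) :
    V.cast h1 h2 f = V.cast h1' h2' f := by
  rw [Subsingleton.elim h1 h1', Subsingleton.elim h2 h2']

theorem Quantaloid.cast_id (V : Quantaloid) {u u' : V.Obj} (h : u = u') :
    V.cast h h (V.id u) = V.id u' := by subst h; rfl

theorem Quantaloid.cast_comp (V : Quantaloid) {u u' v v' w w' : V.Obj}
    (hu : u = u') (hv : v = v') (hw : w = w') (f : V.Hom u v) (g : V.Hom v w) :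
    V.cast hu hw (V.comp f g) = V.comp (V.cast hu hv f) (V.cast hv hw g) := by
  subst hu; subst hv; subst hw; rfl

theorem Quantaloid.cast_mono (V : Quantaloid) {u u' v v' : V.Obj}
    (hu : u = u') (hv : v = v') {f g : V.Hom u v} (h : f ≤ g) :
    V.cast hu hv f ≤ V.cast hu hv g := by
  subst hu; subst hv; exact h

theorem Quantaloid.comp_mono_left (V : Quantaloid) {u v w : V.Obj}
    {f f' : V.Hom u v} (g : V.Hom v w) (h : f ≤ f') : V.comp f g ≤ V.comp f' g := by
  have h2 : sSup ({f, f'} : Set (V.Hom u v)) = f' := by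
    rw [sSup_pair, sup_eq_right.2 h]
  calc V.comp f g ≤ sSup ((fun x => V.comp x g) '' {f, f'}) :=
        le_sSup ⟨f, by simp, rfl⟩
    _ = V.comp (sSup ({f, f'} : Set (V.Hom u v))) g := (V.comp_sSup_left _ _).symm
    _ = V.comp f' g := by rw [h2]

theorem Quantaloid.comp_mono_right (V : Quantaloid) {u v w : V.Obj}
    (f : V.Hom u v) {g g' : V.Hom v w} (h : g ≤ g') : V.comp f g ≤ V.comp f g' := by
  have h2 : sSup ({g, g'} : Set (V.Hom v w)) = g' := by
    rw [sSup_pair, sup_eq_right.2 h]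
  calc V.comp f g ≤ sSup ((fun x => V.comp f x) '' {g, g'}) :=
        le_sSup ⟨g, by simp, rfl⟩
    _ = V.comp f (sSup ({g, g'} : Set (V.Hom v w))) := (V.comp_sSup_right _ _).symm
    _ = V.comp f g' := by rw [h2]

/-- Hom-objects of the slice quantaloid. -/
abbrev SHom (a b : A.Obj) : Type := {x : V.Hom (A.pt a) (A.pt b) // x ≤ A.hom a b}

noncomputable instance SHom.supSet (a b : A.Obj) : SupSet (SHom V A a b) :=
  ⟨fun S => ⟨sSup (Subtype.val '' S), sSup_le (by rintro _ ⟨y, _, rfl⟩; exact y.2)⟩⟩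

theorem SHom.coe_sSup {a b : A.Obj} (S : Set (SHom V A a b)) :
    (sSup S).1 = sSup (Subtype.val '' S) := rfl

noncomputable instance SHom.completeLattice (a b : A.Obj) :
    CompleteLattice (SHom V A a b) :=
  completeLatticeOfSup _ (fun S =>
    ⟨fun x hx => le_sSup (α := V.Hom (A.pt a) (A.pt b)) ⟨x, hx, rfl⟩,
     fun x hx => sSup_le (α := V.Hom (A.pt a) (A.pt b))
       (by rintro _ ⟨y, hy, rfl⟩; exact hx hy)⟩)

/-- The slice quantaloid `V(A)`. -/
noncomputable def sliceQ : Quantaloid where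
  Obj := A.Obj
  Hom a b := SHom V A a b
  lat a b := SHom.completeLattice V A a b
  comp {a b c} f g := ⟨V.comp f.1 g.1,
    le_trans (le_trans (V.comp_mono_left _ f.2) (V.comp_mono_right _ g.2))
      (A.comp_le a b c)⟩
  id a := ⟨V.id (A.pt a), A.id_le a⟩
  comp_assoc f g h := Subtype.ext (V.comp_assoc f.1 g.1 h.1)
  id_comp f := Subtype.ext (V.id_comp f.1)
  comp_id f := Subtype.ext (V.comp_id f.1)
  comp_sSup_left S g := Subtype.ext (by
    show V.comp (sSup (Subtype.val '' S)) g.1 = sSup (Subtype.val '' _)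
    rw [V.comp_sSup_left, Set.image_image, Set.image_image])
  comp_sSup_right f S := Subtype.ext (by
    show V.comp f.1 (sSup (Subtype.val '' S)) = sSup (Subtype.val '' _)
    rw [V.comp_sSup_right, Set.image_image, Set.image_image])

theorem sliceQ_cast_val {a a' b b' : A.Obj} (hu : a = a') (hv : b = b')
    (f : (sliceQ V A).Hom a b) :
    ((sliceQ V A).cast hu hv f).1 =
      V.cast (congrArg A.pt hu) (congrArg A.pt hv) f.1 := by
  subst hu; subst hv; rfl

/-- From a `V(A)`-category to a `V`-category over `A`. -/
def toSigX (C : VCat (sliceQ V A)) : VCat V where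
  Obj := C.Obj
  pt x := A.pt (C.pt x)
  hom a b := (C.hom a b).1
  id_le a := C.id_le a
  comp_le a b c := C.comp_le a b c

def toSigF (C : VCat (sliceQ V A)) : VFunctor V (toSigX V A C) A where
  toFun := C.pt
  pt_eq _ := rfl
  map_le a a' := (C.hom a a').2

/-- From a `V`-category over `A` to a `V(A)`-category. -/
def ofSig (p : Σ X : VCat V, VFunctor V X A) : VCat (sliceQ V A) where
  Obj := p.1.Obj
  pt := p.2.toFun
  hom a b := ⟨V.cast (p.2.pt_eq a).symm (p.2.pt_eq b).symm (p.1.hom a b),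
    p.2.map_le a b⟩
  id_le a := by
    show V.id (A.pt (p.2.toFun a)) ≤
      V.cast (p.2.pt_eq a).symm (p.2.pt_eq a).symm (p.1.hom a a)
    calc V.id (A.pt (p.2.toFun a))
        = V.cast (p.2.pt_eq a).symm (p.2.pt_eq a).symm (V.id (p.1.pt a)) :=
          (V.cast_id _).symm
      _ ≤ _ := V.cast_mono _ _ (p.1.id_le a)
  comp_le a b c := by
    show V.comp
        (V.cast (p.2.pt_eq a).symm (p.2.pt_eq b).symm (p.1.hom a b))
        (V.cast (p.2.pt_eq b).symm (p.2.pt_eq c).symm (p.1.hom b c)) ≤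
      V.cast (p.2.pt_eq a).symm (p.2.pt_eq c).symm (p.1.hom a c)
    rw [← V.cast_comp]
    exact V.cast_mono _ _ (p.1.comp_le a b c)

theorem sig_congr {Obj : Type} {pt : Obj → V.Obj}
    (hom hom' : ∀ a b : Obj, V.Hom (pt a) (pt b)) (e : hom = hom')
    {il il' cl cl'} {f : Obj → A.Obj} {pe pe' ml ml'} :
    (⟨⟨Obj, pt, hom, il, cl⟩, ⟨f, pe, ml⟩⟩ : Σ X : VCat V, VFunctor V X A) =
      ⟨⟨Obj, pt, hom', il', cl'⟩, ⟨f, pe', ml'⟩⟩ := by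
  subst e; rfl

noncomputable def sigEquiv : VCat (sliceQ V A) ≃ (Σ X : VCat V, VFunctor V X A) where
  toFun C := ⟨toSigX V A C, toSigF V A C⟩
  invFun := ofSig V A
  left_inv C := rfl
  right_inv p := by
    obtain ⟨⟨XObj, Xpt, Xhom, Xil, Xcl⟩, ⟨f, hpe, hml⟩⟩ := p
    dsimp only at f hpe hml
    have h : Xpt = fun x => A.pt (f x) := funext fun a => (hpe a).symm
    subst h
    exact sig_congr V A _ _ (funext fun a => funext fun b => by
      show V.cast (hpe a).symm (hpe b).symm (Xhom a b) = Xhom a b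
      rw [V.cast_irrel _ rfl _ rfl]; rfl)

end SliceAux

/-- the slice construction `V(A)` is a quantaloid with objects
those of `A` and hom-posets the down-sets `{f : f ≤ A(a,b)}` of `V(a₊,b₊)`, with
composition and identities inherited from `V`, and there is an isomorphism
between `V(A)`-categories and the slice of `V`-categories over `A`, compatible
with morphisms (`V(A)`-functors correspond to triangles over `A`). -/
theorem slice_quantaloid_and_slice_iso (V : Quantaloid) (A : VCat V) :
    ∃ (VA : Quantaloid) (eObj : VA.Obj ≃ A.Obj)
      (eHom : ∀ a b : VA.Obj,
        VA.Hom a b ≃o {x : V.Hom (A.pt (eObj a)) (A.pt (eObj b)) // x ≤ A.hom (eObj a) (eObj b)}),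
      (∀ (a b c : VA.Obj) (f : VA.Hom a b) (g : VA.Hom b c),
        ((eHom a c) (VA.comp f g)).1 = V.comp ((eHom a b) f).1 ((eHom b c) g).1) ∧
      (∀ a : VA.Obj, ((eHom a a) (VA.id a)).1 = V.id (A.pt (eObj a))) ∧
      ∃ E : VCat VA ≃ (Σ X : VCat V, VFunctor V X A),
        ∀ C D : VCat VA,
          Nonempty (VFunctor VA C D ≃
            {h : VFunctor V (E C).1 (E D).1 //
              ∀ x, (E D).2.toFun (h.toFun x) = (E C).2.toFun x}) := by
  classical
  refine ⟨sliceQ V A, Equiv.refl _, fun a b =>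
    ⟨Equiv.refl _, Iff.rfl⟩, fun a b c f g => rfl, fun a => rfl,
    sigEquiv V A, fun C D => ⟨?_⟩⟩
  refine
    { toFun := fun G =>
        ⟨{ toFun := G.toFun
           pt_eq := fun a => congrArg A.pt (G.pt_eq a)
           map_le := fun a a' => by
             have h := G.map_le a a'
             have hv := sliceQ_cast_val V A (G.pt_eq a).symm (G.pt_eq a').symm
               (C.hom a a')
             rw [V.cast_irrel (congrArg A.pt (G.pt_eq a).symm)
               (congrArg A.pt (G.pt_eq a)).symm
               (congrArg A.pt (G.pt_eq a').symm)
               (congrArg A.pt (G.pt_eq a')).symm] at hv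
             calc V.cast (congrArg A.pt (G.pt_eq a)).symm
                   (congrArg A.pt (G.pt_eq a')).symm ((C.hom a a').1)
                 = ((sliceQ V A).cast (G.pt_eq a).symm (G.pt_eq a').symm
                     (C.hom a a')).1 := hv.symm
               _ ≤ _ := h },
         fun x => G.pt_eq x⟩
      invFun := fun h =>
        { toFun := h.1.toFun
          pt_eq := fun a => h.2 a
          map_le := fun a a' => by
            show ((sliceQ V A).cast (h.2 a).symm (h.2 a').symm (C.hom a a')).1 ≤
              (D.hom (h.1.toFun a) (h.1.toFun a')).1
            refine (sliceQ_cast_val V A (h.2 a).symm (h.2 a').symm (C.hom a a')).trans_le ?_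
            have := h.1.map_le a a'
            rwa [V.cast_irrel (h.1.pt_eq a).symm (congrArg A.pt (h.2 a).symm)
              (h.1.pt_eq a').symm (congrArg A.pt (h.2 a').symm)] at this }
      left_inv := fun G => rfl
      right_inv := fun h => rfl }
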